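/- Let Δ be an additive subgroup of ℂ, and let φ: Δ × Δ → ℂ be a skew-symmetric ℤ-bilinear form and ψ: Δ → ℂ an additive homomorphism. On the space with basis {x_{α,i} : α ∈ Δ, i ∈ ℕ}, the bracket [x_{α,i}, x_{β,j}] = φ(α,β) x_{α+β,i+j} + (iψ(β) − jψ(α)) x_{α+β,i+j−1} (terms with second index −1 are zero) defines a Lie algebra structure. -/

import Mathlib

open Finsupp


noncomputable def mkBr {ι : Type*} (B : ι → ι → (ι →₀ ℂ)) :
    (ι →₀ ℂ) →ₗ[ℂ] (ι →₀ ℂ) →ₗ[ℂ] (ι →₀ ℂ) :=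
  Finsupp.lsum ℂ fun p => LinearMap.toSpanSingleton ℂ _
    (Finsupp.lsum ℂ fun q => LinearMap.toSpanSingleton ℂ _ (B p q))

lemma mkBr_single {ι : Type*} (B : ι → ι → (ι →₀ ℂ)) (p q : ι) :
    mkBr B (single p 1) (single q 1) = B p q := by
  simp [mkBr, LinearMap.toSpanSingleton_apply]

section aux
variable (Δ : AddSubgroup ℂ) (φ : Δ → Δ → ℂ) (ψ : Δ →+ ℂ)

noncomputable def Bz (p q : Δ × ℤ) : (Δ × ℤ) →₀ ℂ :=
  φ p.1 q.1 • single (p.1 + q.1, p.2 + q.2) 1 +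
    ((p.2 : ℂ) * ψ q.1 - (q.2 : ℂ) * ψ p.1) • single (p.1 + q.1, p.2 + q.2 - 1) 1

lemma jacZ (hadd₁ : ∀ α α' β : Δ, φ (α + α') β = φ α β + φ α' β)
    (hadd₂ : ∀ α β β' : Δ, φ α (β + β') = φ α β + φ α β')
    (hskew : ∀ α β : Δ, φ α β = -φ β α) (p q r : Δ × ℤ) :
    mkBr (Bz Δ φ ψ) (mkBr (Bz Δ φ ψ) (single p 1) (single q 1)) (single r 1) +
    mkBr (Bz Δ φ ψ) (mkBr (Bz Δ φ ψ) (single q 1) (single r 1)) (single p 1) +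
    mkBr (Bz Δ φ ψ) (mkBr (Bz Δ φ ψ) (single r 1) (single p 1)) (single q 1) = 0 := by
  obtain ⟨α, i⟩ := p
  obtain ⟨β, j⟩ := q
  obtain ⟨γ, k⟩ := r
  rw [mkBr_single, mkBr_single, mkBr_single]
  simp only [Bz, map_add, map_smul, LinearMap.add_apply, LinearMap.smul_apply, mkBr_single]
  rw [show β+γ+α = α+β+γ from by abel, show γ+α+β = α+β+γ from by abel,
    show j+k+i = i+j+k from by ring, show k+i+j = i+j+k from by ring,
    show i+j-1+k = i+j+k-1 from by ring,
    show j+k-1+i = i+j+k-1 from by ring, show k+i-1+j = i+j+k-1 from by ring]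
  simp only [hadd₁]
  rw [hskew β α, hskew γ α, hskew γ β]
  push_cast
  module


noncomputable def Bn (p q : Δ × ℕ) : (Δ × ℕ) →₀ ℂ :=
  φ p.1 q.1 • single (p.1 + q.1, p.2 + q.2) 1 +
    ((p.2 : ℂ) * ψ q.1 - (q.2 : ℂ) * ψ p.1) • single (p.1 + q.1, p.2 + q.2 - 1) 1

def fz : Δ × ℕ → Δ × ℤ := fun p => (p.1, (p.2 : ℤ))

lemma fz_inj : Function.Injective (fz Δ) := by
  rintro ⟨a, i⟩ ⟨b, j⟩ h
  simp only [fz, Prod.mk.injEq, Int.natCast_inj] at h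
  simp [h.1, h.2]

lemma compat_basis (p q : Δ × ℕ) :
    mapDomain (fz Δ) (Bn Δ φ ψ p q) = Bz Δ φ ψ (fz Δ p) (fz Δ q) := by
  obtain ⟨α, i⟩ := p
  obtain ⟨β, j⟩ := q
  simp only [Bn, Bz, mapDomain_add, mapDomain_smul, mapDomain_single, fz]
  rcases Nat.eq_zero_or_pos (i + j) with h | h
  · obtain ⟨hi, hj⟩ := Nat.add_eq_zero.mp h
    subst hi; subst hj
    simp
  · have h1 : ((i + j - 1 : ℕ) : ℤ) = (i : ℤ) + j - 1 := by omega
    have h2 : ((i + j : ℕ) : ℤ) = (i : ℤ) + j := by push_cast; ring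
    rw [h1, h2]
    norm_cast

lemma compat_all (u v : (Δ × ℕ) →₀ ℂ) :
    mapDomain (fz Δ) (mkBr (Bn Δ φ ψ) u v) =
      mkBr (Bz Δ φ ψ) (mapDomain (fz Δ) u) (mapDomain (fz Δ) v) := by
  induction u using Finsupp.induction_linear with
  | zero => simp
  | add f g hf hg => simp only [map_add, LinearMap.add_apply, mapDomain_add, hf, hg]
  | single p a =>
    induction v using Finsupp.induction_linear with
    | zero => simp
    | add f g hf hg => simp only [map_add, mapDomain_add, hf, hg]
    | single q b =>
      rw [show single p a = a • single p (1:ℂ) by simp,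
        show single q b = b • single q (1:ℂ) by simp]
      simp only [map_smul, LinearMap.smul_apply, mapDomain_smul, mkBr_single,
        mapDomain_single]
      rw [compat_basis]

lemma skew_basis (p q : Δ × ℕ) (hskew : ∀ α β : Δ, φ α β = -φ β α) :
    Bn Δ φ ψ p q = - Bn Δ φ ψ q p := by
  obtain ⟨α, i⟩ := p
  obtain ⟨β, j⟩ := q
  simp only [Bn]
  rw [hskew α β, show β + α = α + β from add_comm β α,
    show j + i = i + j from Nat.add_comm j i]
  rw [neg_add, ← neg_smul, ← neg_smul, neg_sub]

lemma skew_all (hskew : ∀ α β : Δ, φ α β = -φ β α) (u v : (Δ × ℕ) →₀ ℂ) :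
    mkBr (Bn Δ φ ψ) u v = - mkBr (Bn Δ φ ψ) v u := by
  induction u using Finsupp.induction_linear with
  | zero => simp
  | add f g hf hg =>
    simp only [map_add, LinearMap.add_apply, hf, hg]
    abel
  | single p a =>
    induction v using Finsupp.induction_linear with
    | zero => simp
    | add f g hf hg =>
      simp only [map_add, LinearMap.add_apply, hf, hg]
      abel
    | single q b =>
      rw [show single p a = a • single p (1:ℂ) by simp,
        show single q b = b • single q (1:ℂ) by simp]
      simp only [map_smul, LinearMap.smul_apply, mkBr_single, smul_smul]
      rw [skew_basis Δ φ ψ p q hskew, mul_comm b a]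
      simp

lemma jac_gen {ι : Type*} (B : ι → ι → (ι →₀ ℂ))
    (h : ∀ p q r : ι,
      mkBr B (mkBr B (single p 1) (single q 1)) (single r 1) +
      mkBr B (mkBr B (single q 1) (single r 1)) (single p 1) +
      mkBr B (mkBr B (single r 1) (single p 1)) (single q 1) = 0)
    (u v w : ι →₀ ℂ) :
    mkBr B (mkBr B u v) w + mkBr B (mkBr B v w) u + mkBr B (mkBr B w u) v = 0 := by
  induction u using Finsupp.induction_linear with
  | zero => simp
  | add f g hf hg =>
    have : mkBr B (mkBr B (f + g) v) w + mkBr B (mkBr B v w) (f + g) +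
        mkBr B (mkBr B w (f + g)) v =
        (mkBr B (mkBr B f v) w + mkBr B (mkBr B v w) f + mkBr B (mkBr B w f) v) +
        (mkBr B (mkBr B g v) w + mkBr B (mkBr B v w) g + mkBr B (mkBr B w g) v) := by
      simp only [map_add, LinearMap.add_apply]
      abel
    rw [this, hf, hg, add_zero]
  | single p a =>
    induction v using Finsupp.induction_linear with
    | zero => simp
    | add f g hf hg =>
      have : mkBr B (mkBr B (single p a) (f + g)) w +
          mkBr B (mkBr B (f + g) w) (single p a) +
          mkBr B (mkBr B w (single p a)) (f + g) =
          (mkBr B (mkBr B (single p a) f) w + mkBr B (mkBr B f w) (single p a) +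
            mkBr B (mkBr B w (single p a)) f) +
          (mkBr B (mkBr B (single p a) g) w + mkBr B (mkBr B g w) (single p a) +
            mkBr B (mkBr B w (single p a)) g) := by
        simp only [map_add, LinearMap.add_apply]
        abel
      rw [this, hf, hg, add_zero]
    | single q b =>
      induction w using Finsupp.induction_linear with
      | zero => simp
      | add f g hf hg =>
        have : mkBr B (mkBr B (single p a) (single q b)) (f + g) +
            mkBr B (mkBr B (single q b) (f + g)) (single p a) +
            mkBr B (mkBr B (f + g) (single p a)) (single q b) =
            (mkBr B (mkBr B (single p a) (single q b)) f +
              mkBr B (mkBr B (single q b) f) (single p a) +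
              mkBr B (mkBr B f (single p a)) (single q b)) +
            (mkBr B (mkBr B (single p a) (single q b)) g +
              mkBr B (mkBr B (single q b) g) (single p a) +
              mkBr B (mkBr B g (single p a)) (single q b)) := by
          simp only [map_add, LinearMap.add_apply]
          abel
        rw [this, hf, hg, add_zero]
      | single r c =>
        rw [show single p a = a • single p (1:ℂ) by simp,
          show single q b = b • single q (1:ℂ) by simp,
          show single r c = c • single r (1:ℂ) by simp]
        simp only [map_smul, LinearMap.smul_apply, smul_smul]
        rw [show c * (b * a) = a * (b * c) from by ring,
          show a * (c * b) = a * (b * c) from by ring,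
          show b * (a * c) = a * (b * c) from by ring,
          ← smul_add, ← smul_add, h, smul_zero]
end aux


/-- For a skew-symmetric ℤ-bilinear form φ and an additive homomorphism ψ on Δ,
the bracket [x_{α,i}, x_{β,j}] = φ(α,β)x_{α+β,i+j} + (iψ(β) − jψ(α))x_{α+β,i+j−1}
defines a Lie algebra structure. -/
theorem stmt_18 (Δ : AddSubgroup ℂ) (φ : Δ → Δ → ℂ)
    (hadd₁ : ∀ α α' β : Δ, φ (α + α') β = φ α β + φ α' β)
    (hadd₂ : ∀ α β β' : Δ, φ α (β + β') = φ α β + φ α β')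
    (hskew : ∀ α β : Δ, φ α β = -φ β α)
    (ψ : Δ →+ ℂ) :
    ∃ br : ((Δ × ℕ) →₀ ℂ) →ₗ[ℂ] ((Δ × ℕ) →₀ ℂ) →ₗ[ℂ] ((Δ × ℕ) →₀ ℂ),
      (∀ (α β : Δ) (i j : ℕ), br (single (α, i) 1) (single (β, j) 1) =
        φ α β • single (α + β, i + j) 1 +
        ((i : ℂ) * ψ β - (j : ℂ) * ψ α) • single (α + β, i + j - 1) 1) ∧
      (∀ u, br u u = 0) ∧
      (∀ u v w, br (br u v) w + br (br v w) u + br (br w u) v = 0) := by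
  refine ⟨mkBr (Bn Δ φ ψ), ?_, ?_, ?_⟩
  · intro α β i j
    rw [mkBr_single]
    simp [Bn]
  · intro u
    have hs := skew_all Δ φ ψ hskew u u
    have h2 : (2 : ℂ) • mkBr (Bn Δ φ ψ) u u = 0 := by
      rw [two_smul]
      nth_rewrite 2 [hs]
      simp
    rcases smul_eq_zero.mp h2 with h | h
    · norm_num at h
    · exact h
  · intro u v w
    apply Finsupp.mapDomain_injective (fz_inj Δ)
    rw [mapDomain_add, mapDomain_add, compat_all, compat_all, compat_all,
      compat_all, compat_all, compat_all, mapDomain_zero]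
    exact jac_gen (Bz Δ φ ψ) (jacZ Δ φ ψ hadd₁ hadd₂ hskew) _ _ _
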